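/- Let t be a non-nil full binary tree with real values (t : Tree ℝ) satisfying the tournament property: every node of t whose two subtrees are non-nil carries a value equal to the minimum of the values carried by the roots of its two subtrees. Then the value carried by the root of t equals the minimum of the values carried by the leaves of t. -/

import Mathlib

/-- A binary tree is full if every node has either both subtrees nil or both non-nil. -/
def IsFullTree {α : Type*} : BinaryTree α → Prop
  | BinaryTree.nil => True
  | BinaryTree.node _ l r =>
      ((l = BinaryTree.nil ∧ r = BinaryTree.nil) ∨ (l ≠ BinaryTree.nil ∧ r ≠ BinaryTree.nil)) ∧
      IsFullTree l ∧ IsFullTree r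

/-- The tournament property: every node whose two subtrees are non-nil carries a
value equal to the minimum of the values carried by the roots of its subtrees. -/
def IsTournamentTree : BinaryTree ℝ → Prop
  | BinaryTree.nil => True
  | BinaryTree.node a l r =>
      (∀ (x : ℝ) (l₁ l₂ : BinaryTree ℝ) (y : ℝ) (r₁ r₂ : BinaryTree ℝ),
        l = BinaryTree.node x l₁ l₂ → r = BinaryTree.node y r₁ r₂ → a = min x y) ∧
      IsTournamentTree l ∧ IsTournamentTree r

/-- The list of values carried by the leaves (nodes with both subtrees nil) of a tree. -/
def leafValues : BinaryTree ℝ → List ℝ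
  | BinaryTree.nil => []
  | BinaryTree.node a BinaryTree.nil BinaryTree.nil => [a]
  | BinaryTree.node _ l r => leafValues l ++ leafValues r

lemma minimum_append (l₁ l₂ : List ℝ) :
    (l₁ ++ l₂).minimum = min l₁.minimum l₂.minimum := by
  induction l₁ with
  | nil => simp
  | cons x xs ih =>
      simp [List.minimum_cons, ih, min_assoc]

lemma aux : ∀ t : BinaryTree ℝ, ∀ a l r, t = BinaryTree.node a l r →
    IsFullTree t → IsTournamentTree t →
    (leafValues t).minimum = (a : WithTop ℝ) := by
  intro t
  induction t with
  | nil => intro a l r h; exact absurd h (by simp)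
  | node v tl tr ihl ihr =>
      intro a l r heq hfull htour
      injection heq with h1 h2 h3
      subst h1; subst h2; subst h3
      obtain ⟨hshape, hfl, hfr⟩ := hfull
      obtain ⟨hmin, htl, htr⟩ := htour
      rcases hshape with ⟨rfl, rfl⟩ | ⟨hl, hr⟩
      · simp [leafValues, List.minimum_cons]
      · obtain ⟨x, l₁, l₂, rfl⟩ : ∃ x l₁ l₂, tl = BinaryTree.node x l₁ l₂ := by
          cases tl with
          | nil => exact absurd rfl hl
          | node x l₁ l₂ => exact ⟨x, l₁, l₂, rfl⟩
        obtain ⟨y, r₁, r₂, rfl⟩ : ∃ y r₁ r₂, tr = BinaryTree.node y r₁ r₂ := by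
          cases tr with
          | nil => exact absurd rfl hr
          | node y r₁ r₂ => exact ⟨y, r₁, r₂, rfl⟩
        have ha := hmin x l₁ l₂ y r₁ r₂ rfl rfl
        have hL := ihl x l₁ l₂ rfl hfl htl
        have hR := ihr y r₁ r₂ rfl hfr htr
        rw [show leafValues (BinaryTree.node v (BinaryTree.node x l₁ l₂) (BinaryTree.node y r₁ r₂)) =
          leafValues (BinaryTree.node x l₁ l₂) ++ leafValues (BinaryTree.node y r₁ r₂) from rfl]
        rw [minimum_append, hL, hR, ha, WithTop.coe_min]

/-- In a non-nil full binary tree with the tournament property, the value carried by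
the root equals the minimum of the values carried by the leaves. -/
theorem root_eq_min_leafValues (a : ℝ) (l r : BinaryTree ℝ)
    (hfull : IsFullTree (BinaryTree.node a l r))
    (htour : IsTournamentTree (BinaryTree.node a l r)) :
    (leafValues (BinaryTree.node a l r)).minimum = (a : WithTop ℝ) := by
  exact aux _ a l r rfl hfull htour
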